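/- Let (E, dist) be a complete metric space, let Σ ⊆ E be a closed nonempty set, let D ⊆ Σ be nonempty, and set Γ = Σ \ D, assumed nonempty. Let M : D → (0,∞) be bounded on compact subsets of D, and fix k > 0. If y ∈ D satisfies M(y) · dist(y, Γ) > 2k, then there exists x ∈ D such that M(x) · dist(x, Γ) > 2k, M(x) ≥ M(y), and M(z) ≤ 2 M(x) for every z ∈ D belonging to the closed ball in E of center x and radius k / M(x). -/

import Mathlib

open Set Metric Filter

/-- the doubling lemma of Poláčik–Quittner–Souplet. -/
theorem stmt_19 {E : Type*} [MetricSpace E] [CompleteSpace E]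
    (Sig D : Set E) (hSig_closed : IsClosed Sig) (hSig_ne : Sig.Nonempty)
    (hD_ne : D.Nonempty) (hDSig : D ⊆ Sig) (hΓ_ne : (Sig \ D).Nonempty)
    (M : E → ℝ) (hM_pos : ∀ x ∈ D, 0 < M x)
    (hM_bdd : ∀ K : Set E, K ⊆ D → IsCompact K → ∃ B : ℝ, ∀ x ∈ K, M x ≤ B)
    (k : ℝ) (hk : 0 < k)
    (y : E) (hy : y ∈ D) (hyD : M y * infDist y (Sig \ D) > 2 * k) :
    ∃ x ∈ D,
      M x * infDist x (Sig \ D) > 2 * k ∧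
      M y ≤ M x ∧
      ∀ z ∈ D ∩ closedBall x (k / M x), M z ≤ 2 * M x := by
  classical
  by_contra hcon
  push_neg at hcon
  set Γ := Sig \ D with hΓdef
  have hMy : 0 < M y := hM_pos y hy
  have step : ∀ x, x ∈ D → 2 * k < M x * infDist x Γ → M y ≤ M x →
      ∃ z, z ∈ D ∧ dist z x ≤ k / M x ∧ 2 * M x < M z := by
    intro x hx h1 h2
    obtain ⟨z, hz, hz2⟩ := hcon x hx h1 h2
    exact ⟨z, hz.1, by simpa [mem_closedBall] using hz.2, hz2⟩
  choose! next hnD hnd hnM using step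
  set f : ℕ → E := fun n => Nat.rec y (fun _ p => next p) n with hfdef
  have hf0 : f 0 = y := rfl
  have hfs : ∀ n, f (n + 1) = next (f n) := fun n => rfl
  have inv : ∀ n, f n ∈ D ∧ 2 * k < M (f n) * infDist (f n) Γ ∧ M y ≤ M (f n) := by
    intro n
    induction n with
    | zero => exact ⟨hy, hyD, le_refl _⟩
    | succ n ih =>
      obtain ⟨h1, h2, h3⟩ := ih
      have hpos := hM_pos _ h1
      have hd := hnd _ h1 h2 h3
      have hD' := hnD _ h1 h2 h3
      have hM' := hnM _ h1 h2 h3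
      have hdi : 2 * k / M (f n) < infDist (f n) Γ := by
        rw [div_lt_iff₀ hpos]; linarith [h2]
      have h4 : infDist (f n) Γ ≤ infDist (next (f n)) Γ + dist (f n) (next (f n)) :=
        infDist_le_infDist_add_dist
      rw [dist_comm] at h4
      have h5 : k / M (f n) < infDist (next (f n)) Γ := by
        have : 2 * k / M (f n) = k / M (f n) + k / M (f n) := by ring
        rw [this] at hdi
        linarith
      rw [hfs]
      refine ⟨hD', ?_, ?_⟩
      · have hk' : 0 ≤ k / M (f n) := by positivity
        have := mul_lt_mul'' hM' h5 (by positivity) hk'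
        have heq : 2 * M (f n) * (k / M (f n)) = 2 * k := by
          field_simp
        linarith [this, heq ▸ this]
      · linarith
  have grow : ∀ n, 2 ^ n * M y ≤ M (f n) := by
    intro n
    induction n with
    | zero => simpa using (inv 0).2.2
    | succ n ih =>
      obtain ⟨h1, h2, h3⟩ := inv n
      have hM' := hnM _ h1 h2 h3
      rw [hfs]
      have : (2 : ℝ) ^ (n + 1) * M y = 2 * (2 ^ n * M y) := by ring
      rw [this]
      linarith
  have hdistb : ∀ n, dist (f n) (f (n + 1)) ≤ (k / M y) * (1 / 2) ^ n := by
    intro n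
    obtain ⟨h1, h2, h3⟩ := inv n
    have hpos := hM_pos _ h1
    have hd := hnd _ h1 h2 h3
    rw [hfs, dist_comm]
    refine hd.trans ?_
    rw [div_le_iff₀ hpos]
    have h2n : (0:ℝ) < 2 ^ n := by positivity
    have hle : 2 ^ n * M y ≤ M (f n) := grow n
    have : (k / M y) * (1 / 2) ^ n * (2 ^ n * M y) = k := by
      field_simp
      rw [← mul_pow]; norm_num
    calc k = (k / M y) * (1 / 2) ^ n * (2 ^ n * M y) := this.symm
      _ ≤ (k / M y) * (1 / 2) ^ n * M (f n) := by
          apply mul_le_mul_of_nonneg_left hle (by positivity)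
  have hcauchy : CauchySeq f := cauchySeq_of_le_geometric (1/2) (k / M y) (by norm_num) hdistb
  obtain ⟨l, hl⟩ := cauchySeq_tendsto_of_complete hcauchy
  have hdyl : dist y l ≤ 2 * k / M y := by
    have := dist_le_of_le_geometric_of_tendsto₀ (1/2) (k / M y) (by norm_num) hdistb hl
    rw [hf0] at this
    calc dist y l ≤ (k / M y) / (1 - 1/2) := this
      _ = 2 * k / M y := by ring
  have hinfy : 2 * k / M y < infDist y Γ := by
    rw [div_lt_iff₀ hMy]; linarith [hyD]
  have hinfl : 0 < infDist l Γ := by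
    have h4 : infDist y Γ ≤ infDist l Γ + dist y l :=
      infDist_le_infDist_add_dist
    linarith
  have hlSig : l ∈ Sig :=
    hSig_closed.mem_of_tendsto hl (Filter.Eventually.of_forall fun n => hDSig (inv n).1)
  have hlD : l ∈ D := by
    by_contra hlD
    have : l ∈ Γ := ⟨hlSig, hlD⟩
    have := infDist_zero_of_mem this
    linarith
  have hKcomp : IsCompact (insert l (Set.range f)) := hl.isCompact_insert_range
  have hKD : insert l (Set.range f) ⊆ D := by
    rintro x (rfl | ⟨n, rfl⟩)
    · exact hlD
    · exact (inv n).1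
  obtain ⟨B, hB⟩ := hM_bdd _ hKD hKcomp
  obtain ⟨n, hn⟩ := pow_unbounded_of_one_lt (B / M y) (one_lt_two (α := ℝ))
  have h1 : B < 2 ^ n * M y := (div_lt_iff₀ hMy).1 hn
  have h2 := hB (f n) (mem_insert_of_mem _ (mem_range_self n))
  linarith [grow n]
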